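/- Let Q : Matrix (Fin n) (Fin n) ℂ, b ∈ ℂⁿ, and suppose for all nonzero x ∈ ℂⁿ we have xᴴ Q x ≠ 0. Let V : Matrix (Fin n) (Fin m) ℂ have linearly independent columns and suppose the exact solution u of Q u = b lies in the column space of V. Then the Galerkin system: find z ∈ ℂᵐ with Vᴴ Q V z = Vᴴ b, has a unique solution, and V z = u. -/
import Mathlib


open Matrix

/-- Unique solvability and exactness of the Galerkin system. -/
theorem stmt_9 {n m : ℕ} (Q : Matrix (Fin n) (Fin n) ℂ) (b u : Fin n → ℂ)
    (hnum : ∀ x : Fin n → ℂ, x ≠ 0 → star x ⬝ᵥ Q.mulVec x ≠ 0)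
    (V : Matrix (Fin n) (Fin m) ℂ) (hV : Function.Injective V.mulVec)
    (hu : Q.mulVec u = b) (hmem : ∃ z : Fin m → ℂ, V.mulVec z = u) :
    (∃! z : Fin m → ℂ, (Vᴴ * Q * V).mulVec z = Vᴴ.mulVec b) ∧
    (∀ z : Fin m → ℂ, (Vᴴ * Q * V).mulVec z = Vᴴ.mulVec b → V.mulVec z = u) := by
  obtain ⟨z₀, hz₀⟩ := hmem
  -- key: kernel of VᴴQV is trivial
  have hker : ∀ z : Fin m → ℂ, (Vᴴ * Q * V).mulVec z = 0 → z = 0 := by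
    intro z hz
    by_contra hzne
    have hVz : V.mulVec z ≠ 0 := by
      intro h
      exact hzne (hV (h.trans (V.mulVec_zero).symm))
    have key : star (V.mulVec z) ⬝ᵥ Q.mulVec (V.mulVec z) =
        star z ⬝ᵥ (Vᴴ * Q * V).mulVec z := by
      rw [← mulVec_mulVec, ← mulVec_mulVec]
      conv_rhs => rw [dotProduct_mulVec, ← star_mulVec]
    have := hnum (V.mulVec z) hVz
    rw [key, hz, dotProduct_zero] at this
    exact this rfl
  have hz₀sol : (Vᴴ * Q * V).mulVec z₀ = Vᴴ.mulVec b := by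
    rw [← mulVec_mulVec, ← mulVec_mulVec, hz₀, hu]
  have huniq : ∀ z : Fin m → ℂ, (Vᴴ * Q * V).mulVec z = Vᴴ.mulVec b → z = z₀ := by
    intro z hz
    have : (Vᴴ * Q * V).mulVec (z - z₀) = 0 := by
      rw [mulVec_sub, hz, hz₀sol, sub_self]
    have := hker _ this
    exact sub_eq_zero.mp this
  refine ⟨⟨z₀, hz₀sol, huniq⟩, fun z hz => ?_⟩
  rw [huniq z hz, hz₀]
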